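/- (Upper bound direction of the query formula) Let v1, v2 be vertices with P v1 = i and P v2 = j. Then for every b1 ∈ B(C_i) and every b2 ∈ B(C_j), dist_G(v1,v2) ≤ dist_{C_i}(v1,b1) + dist_BG(b1,b2) + dist_{C_j}(b2,v2). -/

import Mathlib

open scoped ENNReal

namespace SPQ

variable {V : Type*} {ι : Type*}

/-- The length of a walk: the sum of the weights `w` over its consecutive edges. -/
noncomputable def wlen (w : V → V → ℝ≥0∞) {G : SimpleGraph V} {u v : V} (p : G.Walk u v) : ℝ≥0∞ :=
  (p.darts.map fun d => w d.toProd.1 d.toProd.2).sum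

/-- The shortest-path distance: infimum of lengths of all walks (⊤ if none exists). -/
noncomputable def gdist (G : SimpleGraph V) (w : V → V → ℝ≥0∞) (u v : V) : ℝ≥0∞ :=
  ⨅ p : G.Walk u v, wlen w p

/-- The component `C_i`: the subgraph of `G` induced on `P ⁻¹ {i}`
(as a graph on `V`: edges of `G` with both endpoints mapped to `i` by `P`). -/
def comp (G : SimpleGraph V) (P : V → ι) (i : ι) : SimpleGraph V where
  Adj u v := G.Adj u v ∧ P u = i ∧ P v = i
  symm := ⟨fun _ _ h => ⟨h.1.symm, h.2.2, h.2.1⟩⟩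
  loopless := ⟨fun u h => G.irrefl h.1⟩

/-- The boundary `B(C_i)`: vertices of component `i` having a `G`-neighbor
in a different component. -/
def bdry (G : SimpleGraph V) (P : V → ι) (i : ι) : Set V :=
  {v | P v = i ∧ ∃ u, G.Adj v u ∧ P u ≠ i}

/-- The set `B` of all boundary vertices. -/
def bdryAll (G : SimpleGraph V) (P : V → ι) : Set V :=
  ⋃ i, bdry G P i

/-- The boundary graph `BG`: distinct boundary vertices `b1, b2` are adjacent
iff `P b1 = P b2` or `G.Adj b1 b2`. -/
def BGraph (G : SimpleGraph V) (P : V → ι) : SimpleGraph V where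
  Adj b1 b2 := b1 ≠ b2 ∧ b1 ∈ bdryAll G P ∧ b2 ∈ bdryAll G P ∧ (P b1 = P b2 ∨ G.Adj b1 b2)
  symm := by
    refine ⟨?_⟩
    intro u v h
    refine ⟨h.1.symm, h.2.2.1, h.2.1, ?_⟩
    rcases h.2.2.2 with h' | h'
    · exact Or.inl h'.symm
    · exact Or.inr h'.symm
  loopless := ⟨fun u h => h.1 rfl⟩

open Classical in
/-- The edge weight of the boundary graph:
`wt b1 b2 = dist_{C_{P b1}}(b1, b2)` if `P b1 = P b2`, and `w b1 b2` otherwise. -/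
noncomputable def wt (G : SimpleGraph V) (P : V → ι) (w : V → V → ℝ≥0∞) (b1 b2 : V) : ℝ≥0∞ :=
  if P b1 = P b2 then gdist (comp G P (P b1)) w b1 b2 else w b1 b2

lemma wlen_nil {w : V → V → ℝ≥0∞} {G : SimpleGraph V} {u : V} :
    wlen w (SimpleGraph.Walk.nil : G.Walk u u) = 0 := by simp [wlen]

lemma wlen_cons {w : V → V → ℝ≥0∞} {G : SimpleGraph V} {u x v : V}
    (h : G.Adj u x) (p : G.Walk x v) :
    wlen w (SimpleGraph.Walk.cons h p) = w u x + wlen w p := by simp [wlen]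

lemma gdist_mono {H G : SimpleGraph V} (hle : H ≤ G) (w : V → V → ℝ≥0∞) (u v : V) :
    gdist G w u v ≤ gdist H w u v := by
  refine le_iInf fun p => ?_
  have : ∃ q : G.Walk u v, wlen w q = wlen w p := by
    induction p with
    | nil => exact ⟨.nil, rfl⟩
    | cons h p ih =>
      obtain ⟨q, hq⟩ := ih
      exact ⟨.cons (hle h) q, by rw [wlen_cons, wlen_cons, hq]⟩
  obtain ⟨q, hq⟩ := this
  exact hq ▸ iInf_le _ q

lemma gdist_le_wlen {G : SimpleGraph V} (w : V → V → ℝ≥0∞) {u v : V} (p : G.Walk u v) :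
    gdist G w u v ≤ wlen w p := iInf_le _ p

lemma gdist_triangle (G : SimpleGraph V) (w : V → V → ℝ≥0∞) (u x v : V) :
    gdist G w u v ≤ gdist G w u x + gdist G w x v := by
  have key : ∀ (p : G.Walk u x) (q : G.Walk x v), gdist G w u v ≤ wlen w p + wlen w q := by
    intro p q
    calc gdist G w u v ≤ wlen w (p.append q) := gdist_le_wlen w _
      _ = wlen w p + wlen w q := by
          simp [wlen, SimpleGraph.Walk.darts_append]
  calc gdist G w u v ≤ ⨅ (p : G.Walk u x) (q : G.Walk x v), (wlen w p + wlen w q) :=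
        le_iInf₂ key
    _ = gdist G w u x + gdist G w x v := by
        rw [gdist, gdist, ENNReal.iInf_add]
        refine iInf_congr fun p => ?_
        rw [ENNReal.add_iInf]

lemma gdist_le_wt (G : SimpleGraph V) (P : V → ι) (w : V → V → ℝ≥0∞)
    {a b : V} (h : (BGraph G P).Adj a b) :
    gdist G w a b ≤ wt G P w a b := by
  unfold wt
  split_ifs with hP
  · exact gdist_mono (fun x y (hxy : (comp G P (P a)).Adj x y) => hxy.1) w a b
  · have hadj : G.Adj a b := (h.2.2.2.resolve_left hP)
    calc gdist G w a b ≤ wlen w (SimpleGraph.Walk.cons hadj .nil) := gdist_le_wlen w _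
      _ = w a b := by rw [wlen_cons, wlen_nil, add_zero]

lemma gdist_le_gdist_BG (G : SimpleGraph V) (P : V → ι) (w : V → V → ℝ≥0∞) (u v : V) :
    gdist G w u v ≤ gdist (BGraph G P) (wt G P w) u v := by
  refine le_iInf fun p => ?_
  induction p with
  | nil => calc gdist G w _ _ ≤ wlen w (.nil : G.Walk _ _) := gdist_le_wlen w _
      _ = _ := by rw [wlen_nil, wlen_nil]
  | cons h p ih =>
    rw [wlen_cons]
    calc gdist G w _ _ ≤ gdist G w _ _ + gdist G w _ _ := gdist_triangle G w _ _ _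
      _ ≤ wt G P w _ _ + wlen (wt G P w) p := add_le_add (gdist_le_wt G P w h) ih

/-- Upper bound direction of the query formula: Let `v1, v2` be vertices
with `P v1 = i` and `P v2 = j`. Then for every `b1 ∈ B(C_i)` and every `b2 ∈ B(C_j)`,
`dist_G(v1,v2) ≤ dist_{C_i}(v1,b1) + dist_BG(b1,b2) + dist_{C_j}(b2,v2)`. -/
theorem stmt11 {V : Type*} {ι : Type*} [Fintype V] [Fintype ι]
    (G : SimpleGraph V) (w : V → V → ℝ≥0∞)
    (hsymm : ∀ u v, w u v = w v u) (hfin : ∀ u v, G.Adj u v → w u v < ⊤)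
    (P : V → ι) (i j : ι) (v1 v2 : V) (h1 : P v1 = i) (h2 : P v2 = j) :
    ∀ b1 ∈ bdry G P i, ∀ b2 ∈ bdry G P j,
      gdist G w v1 v2 ≤
        gdist (comp G P i) w v1 b1 + gdist (BGraph G P) (wt G P w) b1 b2 +
          gdist (comp G P j) w b2 v2 := by
  intro b1 _ b2 _
  calc gdist G w v1 v2 ≤ gdist G w v1 b1 + gdist G w b1 v2 := gdist_triangle G w _ _ _
    _ ≤ gdist G w v1 b1 + (gdist G w b1 b2 + gdist G w b2 v2) :=
        add_le_add le_rfl (gdist_triangle G w _ _ _)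
    _ ≤ gdist (comp G P i) w v1 b1 +
        (gdist (BGraph G P) (wt G P w) b1 b2 + gdist (comp G P j) w b2 v2) := by
        refine add_le_add (gdist_mono (fun x y (hxy : (comp G P i).Adj x y) => hxy.1) w _ _)
          (add_le_add (gdist_le_gdist_BG G P w _ _)
            (gdist_mono (fun x y (hxy : (comp G P j).Adj x y) => hxy.1) w _ _))
    _ = _ := by ring

end SPQ
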